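/- Let θ_1,…,θ_n ∈ (0,π/2) with ∑_{i=1}^n θ_i = π. Then for every positive integer α, (∑_{i=1}^n tan θ_i)^{2α} − (n tan(π/n))^α (∑_{i=1}^n tan θ_i)^α ≥ (tan(π/n))^α [(∑_{i=1}^n tan θ_i)^α − (n tan(π/n))^α], with equality if and only if θ_1 = ⋯ = θ_n = π/n. -/

import Mathlib

open Real in
lemma tan_strictConvexOn : StrictConvexOn ℝ (Set.Ioo (0:ℝ) (π/2)) tan := by
  have hπ := Real.pi_pos
  apply StrictMonoOn.strictConvexOn_of_deriv (convex_Ioo _ _)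
  · intro x hx
    exact (Real.continuousAt_tan.2 (Real.cos_pos_of_mem_Ioo
      ⟨by linarith [hx.1], hx.2⟩).ne').continuousWithinAt
  · rw [interior_Ioo]
    intro x hx y hy hxy
    rw [Real.deriv_tan, Real.deriv_tan]
    have hcx : 0 < Real.cos x := Real.cos_pos_of_mem_Ioo ⟨by linarith [hx.1], hx.2⟩
    have hcy : 0 < Real.cos y := Real.cos_pos_of_mem_Ioo ⟨by linarith [hy.1], hy.2⟩
    have : Real.cos y < Real.cos x := by
      apply Real.cos_lt_cos_of_nonneg_of_le_pi hx.1.le (by linarith [hy.2, Real.pi_pos]) hxy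
    have h2 : Real.cos y ^ 2 < Real.cos x ^ 2 := by nlinarith
    rw [div_lt_div_iff₀ (by positivity) (by positivity)]
    nlinarith

open Real in
theorem stmt2 (n : ℕ) (hn : 3 ≤ n)
    (θ : Fin n → ℝ) (hθ : ∀ i, θ i ∈ Set.Ioo (0:ℝ) (π / 2))
    (hsum : ∑ i, θ i = π) (α : ℕ) (hα : 0 < α) :
    (tan (π / n)) ^ α * ((∑ i, tan (θ i)) ^ α - ((n : ℝ) * tan (π / n)) ^ α)
      ≤ (∑ i, tan (θ i)) ^ (2 * α) - ((n : ℝ) * tan (π / n)) ^ α * (∑ i, tan (θ i)) ^ α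
    ∧ ((∑ i, tan (θ i)) ^ (2 * α) - ((n : ℝ) * tan (π / n)) ^ α * (∑ i, tan (θ i)) ^ α
        = (tan (π / n)) ^ α * ((∑ i, tan (θ i)) ^ α - ((n : ℝ) * tan (π / n)) ^ α)
      ↔ ∀ i, θ i = π / n) := by
  have hπ := Real.pi_pos
  have hn0 : (0:ℝ) < n := by positivity
  have hn3 : (3:ℝ) ≤ n := by exact_mod_cast hn
  have hmem : π / n ∈ Set.Ioo (0:ℝ) (π/2) := by
    constructor
    · positivity
    · rw [div_lt_div_iff₀ hn0 two_pos]; nlinarith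
  have hT : 0 < tan (π / n) := Real.tan_pos_of_pos_of_lt_pi_div_two hmem.1 hmem.2
  set S := ∑ i, tan (θ i) with hS
  set T := tan (π / n) with hTdef
  -- Jensen
  have hw : ∀ i ∈ Finset.univ (α := Fin n), (0:ℝ) < 1 / n := fun _ _ => by positivity
  have hw1 : ∑ _i : Fin n, (1:ℝ) / n = 1 := by
    simp [Finset.sum_const, Finset.card_univ]
    field_simp
  have hcomb : ∑ i, (1/(n:ℝ)) • θ i = π / n := by
    simp only [smul_eq_mul, ← Finset.mul_sum, hsum]
    field_simp
  have hjensen : T ≤ (n:ℝ)⁻¹ * S := by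
    have := tan_strictConvexOn.convexOn.map_sum_le (t := Finset.univ) (w := fun _ => 1/(n:ℝ))
      (p := θ) (fun i _ => (hw i (Finset.mem_univ i)).le) hw1 (fun i _ => hθ i)
    rw [hcomb] at this
    simp only [smul_eq_mul, one_div] at this
    rw [← Finset.mul_sum] at this
    exact this
  have hST : (n:ℝ) * T ≤ S := by
    have h2 := mul_le_mul_of_nonneg_left hjensen hn0.le
    rwa [mul_inv_cancel_left₀ hn0.ne'] at h2
  have hSpos : 0 < S := lt_of_lt_of_le (by positivity) hST
  -- equality case for sum
  have heqiff : S = (n:ℝ) * T ↔ ∀ i, θ i = π / n := by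
    constructor
    · intro h
      have hle : ∑ i, (1/(n:ℝ)) • tan (θ i) ≤ tan (∑ i, (1/(n:ℝ)) • θ i) := by
        rw [hcomb]
        simp only [smul_eq_mul, ← Finset.mul_sum, ← hS]
        rw [h]
        field_simp
        exact le_of_eq hTdef
      have hall := tan_strictConvexOn.eq_of_le_map_sum hw hw1 (fun i _ => hθ i) hle
      intro i
      have hconst : ∀ j, θ j = θ i := fun j =>
        hall (Finset.mem_univ j) (Finset.mem_univ i)
      have : ∑ j, θ j = n * θ i := by
        rw [Finset.sum_congr rfl (fun j _ => hconst j)]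
        simp [Finset.card_univ, mul_comm]
      rw [hsum] at this
      field_simp
      linarith
    · intro h
      have : S = n * T := by
        rw [hS, Finset.sum_congr rfl (fun j _ => by rw [h j])]
        simp [Finset.card_univ, mul_comm]
        exact Or.inl hTdef.symm
      exact this
  -- abbreviations
  set A := S ^ α with hA
  set B := ((n:ℝ) * T) ^ α with hB
  set C := T ^ α with hC
  have hBA : B ≤ A := pow_le_pow_left₀ (by positivity) hST α
  have hCB : C < B := by
    rw [hB, mul_pow]
    have h1 : (1:ℝ) < (n:ℝ) ^ α := one_lt_pow₀ (by linarith) hα.ne'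
    nlinarith [pow_pos hT α]
  have hCpos : 0 < C := pow_pos hT α
  have hkey : S ^ (2*α) - B * A = A * A - B * A := by
    rw [hA, two_mul, pow_add]
  constructor
  · rw [hkey]
    nlinarith
  · rw [hkey]
    constructor
    · intro h
      have hfac : (A - B) * (A - C) = 0 := by nlinarith
      have hAC : A - C > 0 := by linarith
      have hAB : A = B := by
        rcases mul_eq_zero.1 hfac with h' | h'
        · linarith
        · linarith
      rw [← heqiff]
      rcases lt_or_eq_of_le hST with hlt | heq
      · exact absurd hAB.symm (pow_lt_pow_left₀ hlt (by positivity) hα.ne').ne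
      · exact heq.symm
    · intro h
      have hSeq : S = (n:ℝ) * T := heqiff.2 h
      have : A = B := by rw [hA, hB, hSeq]
      rw [this]
      ring
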